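/- For every real number p with 1 < p ≤ 2 and all vectors ξ, η in ℝ^m not both zero, ⟨|ξ|^{p-2}ξ − |η|^{p-2}η, ξ − η⟩ ≥ (p−1)(|ξ|^2 + |η|^2)^{(p-2)/2} |ξ − η|^2. -/

import Mathlib

open Real

/-- Square of a real number as rpow. -/
private lemma sq_rpow_half (a z : ℝ) (ha : 0 < a) :
    ((a ^ 2 : ℝ)) ^ (z / 2) = a ^ z := by
  rw [← Real.rpow_natCast a 2, ← Real.rpow_mul ha.le]
  congr 1
  push_cast
  ring

/-- Key scalar inequality from concavity of `x ↦ x^(p-1)`. -/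
private lemma key_ineq (p a b : ℝ) (hp1 : 1 < p) (hp2 : p ≤ 2)
    (ha : 0 < a) (hb : 0 ≤ b) (hba : b ≤ a) :
    (p - 1) * (a ^ 2 + b ^ 2) ^ ((p - 2) / 2) * (a - b) ≤ a ^ (p - 1) - b ^ (p - 1) := by
  have h1 : (a ^ 2 + b ^ 2 : ℝ) ^ ((p - 2) / 2) ≤ a ^ (p - 2) := by
    rw [← sq_rpow_half a (p - 2) ha]
    exact Real.rpow_le_rpow_of_nonpos (by positivity) (by nlinarith) (by linarith)
  have h2 : b ^ (p - 1) ≤ a ^ (p - 1) + (p - 1) * a ^ (p - 2) * (b - a) := by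
    have hs : (-1 : ℝ) ≤ b / a - 1 := by
      have : 0 ≤ b / a := div_nonneg hb ha.le
      linarith
    have hber := rpow_one_add_le_one_add_mul_self hs
      (by linarith : (0:ℝ) ≤ p - 1) (by linarith : p - 1 ≤ 1)
    have hba' : (1 : ℝ) + (b / a - 1) = b / a := by ring
    rw [hba'] at hber
    have hap : (0:ℝ) < a ^ (p - 1) := Real.rpow_pos_of_pos ha _
    have hmul := mul_le_mul_of_nonneg_right hber hap.le
    have hd : (b / a) ^ (p - 1) * a ^ (p - 1) = b ^ (p - 1) := by
      rw [Real.div_rpow hb ha.le, div_mul_cancel₀]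
      exact hap.ne'
    have ha12 : a ^ (p - 1) = a ^ (p - 2) * a := by
      rw [show p - 1 = (p - 2) + 1 by ring, Real.rpow_add_one ha.ne']
    rw [hd] at hmul
    calc b ^ (p - 1) ≤ (1 + (p - 1) * (b / a - 1)) * a ^ (p - 1) := hmul
      _ = a ^ (p - 1) + (p - 1) * a ^ (p - 2) * (b - a) := by
          rw [ha12]; field_simp
  have hab : 0 ≤ a - b := by linarith
  nlinarith [mul_le_mul_of_nonneg_right h1 hab, mul_nonneg (sub_nonneg.2 hp1.le) hab]

/-- Scalar inequality, case b ≤ a. -/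
private lemma scalar_aux (p a b t : ℝ) (hp1 : 1 < p) (hp2 : p ≤ 2)
    (ha : 0 < a) (hb : 0 ≤ b) (hba : b ≤ a) (ht1 : -(a * b) ≤ t) (ht2 : t ≤ a * b) :
    (p - 1) * (a ^ 2 + b ^ 2) ^ ((p - 2) / 2) * (a ^ 2 - 2 * t + b ^ 2) ≤
      a ^ (p - 2) * a ^ 2 + b ^ (p - 2) * b ^ 2 - (a ^ (p - 2) + b ^ (p - 2)) * t := by
  set K := (p - 1) * (a ^ 2 + b ^ 2) ^ ((p - 2) / 2) with hK
  set c := a ^ (p - 2) with hc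
  set d := b ^ (p - 2) with hd
  have hXpos : (0:ℝ) < (a ^ 2 + b ^ 2) ^ ((p - 2) / 2) :=
    Real.rpow_pos_of_pos (by positivity) _
  have hKpos : 0 < K := by
    have : 0 < p - 1 := by linarith
    exact mul_pos this hXpos
  have hkey := key_ineq p a b hp1 hp2 ha hb hba
  rw [← hK] at hkey
  have hca : c * a = a ^ (p - 1) := by
    rw [hc, ← Real.rpow_add_one ha.ne']; ring_nf
  have hcnn : 0 ≤ c := Real.rpow_nonneg ha.le _
  have hdnn : 0 ≤ d := Real.rpow_nonneg hb _
  rcases eq_or_lt_of_le hb with hb0 | hb0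
  · -- b = 0, hence t = 0
    have hbz : b = 0 := hb0.symm
    have htz : t = 0 := by rw [hbz] at ht1 ht2; simp at ht1 ht2; linarith
    have heq : (a ^ 2 + b ^ 2 : ℝ) ^ ((p - 2) / 2) = c := by
      rw [hbz, hc]; simpa using sq_rpow_half a (p - 2) ha
    rw [htz, hbz]
    rw [hK, heq]
    nlinarith [mul_nonneg hcnn (sq_nonneg a), sq_nonneg a]
  · -- b > 0
    have hdb : d * b = b ^ (p - 1) := by
      rw [hd, ← Real.rpow_add_one hb0.ne']; ring_nf
    have h1 : (a ^ 2 + b ^ 2 : ℝ) ^ ((p - 2) / 2) ≤ c := by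
      rw [hc, ← sq_rpow_half a (p - 2) ha]
      exact Real.rpow_le_rpow_of_nonpos (by positivity) (by nlinarith) (by linarith)
    have h1' : (a ^ 2 + b ^ 2 : ℝ) ^ ((p - 2) / 2) ≤ d := by
      rw [hd, ← sq_rpow_half b (p - 2) hb0]
      exact Real.rpow_le_rpow_of_nonpos (by positivity) (by nlinarith) (by linarith)
    have h2K : 2 * K ≤ c + d := by
      have hp1' : 0 ≤ p - 1 := by linarith
      have hp2' : 0 ≤ 2 - p := by linarith
      nlinarith [mul_le_mul_of_nonneg_left h1 hp1', mul_le_mul_of_nonneg_left h1' hp1']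
    have h3 : 0 ≤ (a - b) * (c * a - d * b - K * (a - b)) := by
      apply mul_nonneg (by linarith)
      rw [hca, hdb]; linarith [hkey]
    have h4 : 0 ≤ (a * b - t) * (c + d - 2 * K) := by
      apply mul_nonneg (by linarith) (by linarith)
    nlinarith [h3, h4]

/-- Scalar inequality, symmetric version. -/
private lemma scalar_main (p a b t : ℝ) (hp1 : 1 < p) (hp2 : p ≤ 2)
    (ha : 0 ≤ a) (hb : 0 ≤ b) (hab : 0 < a ^ 2 + b ^ 2)
    (ht1 : -(a * b) ≤ t) (ht2 : t ≤ a * b) :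
    (p - 1) * (a ^ 2 + b ^ 2) ^ ((p - 2) / 2) * (a ^ 2 - 2 * t + b ^ 2) ≤
      a ^ (p - 2) * a ^ 2 + b ^ (p - 2) * b ^ 2 - (a ^ (p - 2) + b ^ (p - 2)) * t := by
  rcases le_total b a with h | h
  · have ha' : 0 < a := by
      rcases lt_or_eq_of_le ha with h' | h'
      · exact h'
      · exfalso; have : b = 0 := le_antisymm (h.trans h'.symm.le) hb
        rw [← h', this] at hab; simp at hab
    exact scalar_aux p a b t hp1 hp2 ha' hb h ht1 ht2
  · have hb' : 0 < b := by
      rcases lt_or_eq_of_le hb with h' | h'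
      · exact h'
      · exfalso; have : a = 0 := le_antisymm (h.trans h'.symm.le) ha
        rw [← h', this] at hab; simp at hab
    have := scalar_aux p b a t hp1 hp2 hb' ha h (by linarith [ht1, mul_comm a b] : -(b * a) ≤ t)
      (by linarith [ht2, mul_comm a b] : t ≤ b * a)
    have hcomm : (b ^ 2 + a ^ 2 : ℝ) = a ^ 2 + b ^ 2 := by ring
    rw [hcomm] at this
    linarith [this]

theorem stmt_2 (m : ℕ) (p : ℝ) (hp1 : 1 < p) (hp2 : p ≤ 2)
    (ξ η : EuclideanSpace ℝ (Fin m)) (hne : ¬(ξ = 0 ∧ η = 0)) :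
    (inner ℝ ((‖ξ‖ ^ (p - 2)) • ξ - (‖η‖ ^ (p - 2)) • η) (ξ - η) : ℝ) ≥
      (p - 1) * (‖ξ‖ ^ 2 + ‖η‖ ^ 2) ^ ((p - 2) / 2) * ‖ξ - η‖ ^ 2 := by
  set a := ‖ξ‖ with haDef
  set b := ‖η‖ with hbDef
  have hinner : (inner ℝ ((a ^ (p - 2)) • ξ - (b ^ (p - 2)) • η) (ξ - η) : ℝ) =
      a ^ (p - 2) * a ^ 2 + b ^ (p - 2) * b ^ 2 -
        (a ^ (p - 2) + b ^ (p - 2)) * (inner ℝ ξ η : ℝ) := by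
    simp only [inner_sub_left, inner_sub_right, real_inner_smul_left,
      real_inner_self_eq_norm_sq, real_inner_comm η ξ]
    ring
  have hns : ‖ξ - η‖ ^ 2 = a ^ 2 - 2 * (inner ℝ ξ η : ℝ) + b ^ 2 := norm_sub_sq_real ξ η
  have hab : 0 < a ^ 2 + b ^ 2 := by
    by_cases hξ : ξ = 0
    · have hη : η ≠ 0 := fun h => hne ⟨hξ, h⟩
      have : 0 < b := norm_pos_iff.mpr hη
      positivity
    · have : 0 < a := norm_pos_iff.mpr hξ
      positivity
  have hcs := abs_real_inner_le_norm ξ η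
  rw [abs_le] at hcs
  rw [ge_iff_le, hinner, hns]
  exact scalar_main p a b _ hp1 hp2 (norm_nonneg ξ) (norm_nonneg η) hab hcs.1 hcs.2
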